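/- Fix an initial state ξ in 𝔹_T^N. For every transient state x ∈ 𝔹_T^N, the stationary probability π_⟲(ξ)(x) of the amended Markov chain with reset probability u is differentiable in u at u = 0, and its derivative there equals the sojourn time t_ξ(x): (d/du)|_{u=0} π_⟲(ξ)(x) = t_ξ(x). -/

import Mathlib

open Finset Filter Asymptotics Topology

namespace Evo

/-- A population state: each of the `N` individuals has type `A` (`true`) or `B` (`false`). -/
abbrev St (N : ℕ) := Fin N → Bool

/-- A replacement event `(R, α)`: the set `R` of replaced individuals together with a
parentage map (only the values on `R` are relevant). -/
abbrev Event (N : ℕ) := Finset (Fin N) × (Fin N → Fin N)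

/-- The extended parentage map `α̃`, equal to `α` on `R` and the identity off `R`. -/
def extMap {N : ℕ} (e : Event N) (i : Fin N) : Fin N := if i ∈ e.1 then e.2 i else i

/-- The state update induced by a replacement event: `x ↦ x_α̃`. -/
def upd {N : ℕ} (e : Event N) (x : St N) : St N := fun i => x (extMap e i)

/-- Boolean values as reals. -/
def bv (b : Bool) : ℝ := if b then 1 else 0

/-- The all-`A` state. -/
def stA (N : ℕ) : St N := fun _ => true

/-- The all-`B` state. -/
def stB (N : ℕ) : St N := fun _ => false

/-- Transient (non-monoallelic) states, i.e. members of `𝔹_T^N`. -/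
def Transient {N : ℕ} (x : St N) : Prop := x ≠ stA N ∧ x ≠ stB N

/-- A replacement rule: for each state, a probability distribution over replacement events. -/
def IsRule {N : ℕ} (p : St N → Event N → ℝ) : Prop :=
  (∀ x e, 0 ≤ p x e) ∧ ∀ x, ∑ e : Event N, p x e = 1

/-- A state-independent distribution over replacement events (a neutral replacement rule). -/
def IsDist {N : ℕ} (p0 : Event N → ℝ) : Prop :=
  (∀ e, 0 ≤ p0 e) ∧ ∑ e : Event N, p0 e = 1

/-- Transition matrix of the Markov chain induced by a replacement rule. -/
def tmat {N : ℕ} (p : St N → Event N → ℝ) : Matrix (St N) (St N) ℝ :=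
  Matrix.of fun x y => ∑ e : Event N, if upd e x = y then p x e else 0

/-- The Fixation Axiom. -/
def FixAxiom {N : ℕ} (p : St N → Event N → ℝ) : Prop :=
  ∃ (i : Fin N) (m : ℕ) (ev : Fin m → Event N), 1 ≤ m ∧
    (∀ k x, 0 < p x (ev k)) ∧ (∃ k, i ∈ (ev k).1) ∧
    (∀ j, (List.ofFn fun k => extMap (ev k)).foldr (· ∘ ·) id j = i)

/-- The sojourn time `t_ξ(x)`: expected number of visits to `x` prior to absorption,
starting from `ξ` (expressed as `Σ_t (P^t)(ξ, x)`). -/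
noncomputable def sojourn {N : ℕ} (p : St N → Event N → ℝ) (ξ x : St N) : ℝ :=
  ∑' t : ℕ, (tmat p ^ t) ξ x

/-- The amended transition matrix `P^⟲(ξ)`: from the monoallelic states the chain resets to
`ξ` with probability `u`, and otherwise follows the original chain (scaled by `1 - u`). -/
def amend {N : ℕ} (p : St N → Event N → ℝ) (ξ : St N) (u : ℝ) : Matrix (St N) (St N) ℝ :=
  Matrix.of fun x y =>
    if x = stA N ∨ x = stB N then (if y = ξ then u else (1 - u) * tmat p x y)
    else tmat p x y

/-- `q` is a stationary distribution for the transition matrix `P`. -/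
def IsStat {N : ℕ} (P : Matrix (St N) (St N) ℝ) (q : St N → ℝ) : Prop :=
  (∀ x, 0 ≤ q x) ∧ (∑ x : St N, q x = 1) ∧ ∀ y, ∑ x : St N, q x * P x y = q y

section Aux

variable {N : ℕ}

instance instDecT : DecidablePred (Transient (N := N)) := fun _ =>
  inferInstanceAs (Decidable (_ ∧ _))

/-- Transient states as a subtype. -/
abbrev TS (N : ℕ) := {z : St N // Transient z}

lemma upd_stA (e : Event N) : upd e (stA N) = stA N := rfl

lemma upd_stB (e : Event N) : upd e (stB N) = stB N := rfl

lemma tmat_nonneg {p : St N → Event N → ℝ} (hp : IsRule p) (x y : St N) :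
    0 ≤ tmat p x y := by
  refine Finset.sum_nonneg fun e _ => ?_
  split
  · exact hp.1 x e
  · exact le_rfl

lemma tmat_row {p : St N → Event N → ℝ} (hp : IsRule p) (x : St N) :
    ∑ y : St N, tmat p x y = 1 := by
  unfold tmat
  simp only [Matrix.of_apply]
  rw [Finset.sum_comm]
  calc ∑ e : Event N, ∑ y : St N, (if upd e x = y then p x e else 0)
      = ∑ e : Event N, p x e := by
        refine Finset.sum_congr rfl fun e _ => ?_
        simp [Finset.sum_ite_eq]
    _ = 1 := hp.2 x

lemma tmat_stA {p : St N → Event N → ℝ} (y : St N) (hy : y ≠ stA N) :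
    tmat p (stA N) y = 0 := by
  unfold tmat
  simp only [Matrix.of_apply, upd_stA]
  exact Finset.sum_eq_zero fun e _ => by simp [Ne.symm hy]

lemma tmat_stB {p : St N → Event N → ℝ} (y : St N) (hy : y ≠ stB N) :
    tmat p (stB N) y = 0 := by
  unfold tmat
  simp only [Matrix.of_apply, upd_stB]
  exact Finset.sum_eq_zero fun e _ => by simp [Ne.symm hy]

lemma tmat_pow_nonneg {p : St N → Event N → ℝ} (hp : IsRule p) (t : ℕ) (x y : St N) :
    0 ≤ (tmat p ^ t) x y := by
  induction t generalizing x y with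
  | zero => simp [Matrix.one_apply]; split <;> norm_num
  | succ n ih =>
    rw [pow_succ, Matrix.mul_apply]
    exact Finset.sum_nonneg fun z _ => mul_nonneg (ih x z) (tmat_nonneg hp z y)

lemma tmat_pow_row {p : St N → Event N → ℝ} (hp : IsRule p) (t : ℕ) (x : St N) :
    ∑ y : St N, (tmat p ^ t) x y = 1 := by
  induction t generalizing x with
  | zero => simp [Matrix.one_apply]
  | succ n ih =>
    simp only [pow_succ, Matrix.mul_apply]
    rw [Finset.sum_comm]
    calc ∑ z : St N, ∑ y : St N, (tmat p ^ n) x z * tmat p z y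
        = ∑ z : St N, (tmat p ^ n) x z * 1 := by
          refine Finset.sum_congr rfl fun z _ => ?_
          rw [← Finset.mul_sum, tmat_row hp]
      _ = 1 := by simp [ih x]

/-- Splitting a sum over all states into absorbing + transient parts. -/
lemma sum_split (hAB : stA N ≠ stB N) (g : St N → ℝ) :
    ∑ y : St N, g y = g (stA N) + g (stB N) + ∑ y : TS N, g y.1 := by
  classical
  have h1 : ∑ y : TS N, g y.1
      = ∑ y ∈ Finset.univ.filter (Transient (N := N)), g y := by
    rw [Finset.sum_subtype (p := Transient (N := N))
      (Finset.univ.filter (Transient (N := N))) (fun z => by simp) g]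
  have h2 : (Finset.univ.filter fun y => ¬ Transient (N := N) y)
      = ({stA N, stB N} : Finset (St N)) := by
    ext y
    simp only [Finset.mem_filter, Finset.mem_univ, true_and, Transient,
      not_and_or, not_not, Finset.mem_insert, Finset.mem_singleton]
  have h3 := Finset.sum_filter_add_sum_filter_not Finset.univ (Transient (N := N)) g
  rw [h2] at h3
  have h4 : ∑ y ∈ ({stA N, stB N} : Finset (St N)), g y = g (stA N) + g (stB N) := by
    rw [Finset.sum_insert (by simp [hAB]), Finset.sum_singleton]
  rw [← h3, h4, h1]; ring

end Aux
section Aux2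

variable {N : ℕ}

/-- Transition matrix restricted to transient states. -/
def subQ (p : St N → Event N → ℝ) : Matrix (TS N) (TS N) ℝ :=
  Matrix.of fun a b => tmat p a.1 b.1

lemma subQ_pow_eq {p : St N → Event N → ℝ} (hAB : stA N ≠ stB N)
    (t : ℕ) (a b : TS N) : (subQ p ^ t) a b = (tmat p ^ t) a.1 b.1 := by
  induction t generalizing b with
  | zero =>
    simp only [pow_zero, Matrix.one_apply]
    by_cases h : a = b
    · simp [h]
    · have : a.1 ≠ b.1 := fun hh => h (Subtype.ext hh)
      simp [h, this]
  | succ n ih =>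
    rw [pow_succ, pow_succ, Matrix.mul_apply, Matrix.mul_apply]
    rw [sum_split hAB (fun y => (tmat p ^ n) a.1 y * tmat p y b.1)]
    rw [tmat_stA b.1 b.2.1, tmat_stB b.1 b.2.2, mul_zero, mul_zero, zero_add, zero_add]
    exact Finset.sum_congr rfl fun y _ => by rw [ih y]; rfl

lemma subQ_nonneg {p : St N → Event N → ℝ} (hp : IsRule p) (hAB : stA N ≠ stB N)
    (t : ℕ) (a b : TS N) : 0 ≤ (subQ p ^ t) a b := by
  rw [subQ_pow_eq hAB]; exact tmat_pow_nonneg hp t _ _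

/-- One-step lower bound along a prescribed event. -/
lemma tmat_step_le {p : St N → Event N → ℝ} (hp : IsRule p) (z : St N) (e : Event N) :
    p z e ≤ tmat p z (upd e z) := by
  have h := Finset.single_le_sum
    (f := fun e' => if upd e' z = upd e z then p z e' else 0)
    (fun i _ => by
      by_cases h : upd i z = upd e z <;> simp [h, hp.1 z i]) (Finset.mem_univ e)
  simpa [tmat] using h

/-- Positivity of a path probability. -/
lemma tmat_path_pos {p : St N → Event N → ℝ} (hp : IsRule p) :
    ∀ (es : List (Event N)) (z : St N), (∀ e ∈ es, ∀ w, 0 < p w e) →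
      0 < (tmat p ^ es.length) z (es.foldl (fun s e => upd e s) z) := by
  intro es
  induction es with
  | nil => intro z _; simp [Matrix.one_apply]
  | cons e es ih =>
    intro z hpos
    have hlen : (e :: es).length = 1 + es.length := by simp [Nat.add_comm]
    rw [List.foldl_cons, hlen, pow_add, pow_one, Matrix.mul_apply]
    have key : 0 < tmat p z (upd e z) *
        (tmat p ^ es.length) (upd e z) (es.foldl (fun s e => upd e s) (upd e z)) := by
      refine mul_pos (lt_of_lt_of_le (hpos e (by simp) z) (tmat_step_le hp z e)) ?_
      exact ih (upd e z) (fun e' he' w => hpos e' (by simp [he']) w)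
    refine lt_of_lt_of_le key ?_
    refine Finset.single_le_sum (f := fun y => tmat p z y *
      (tmat p ^ es.length) y (es.foldl (fun s e => upd e s) (upd e z)))
      (fun y _ => mul_nonneg (tmat_nonneg hp _ _) (tmat_pow_nonneg hp _ _ _))
      (Finset.mem_univ (upd e z))

lemma foldl_upd :
    ∀ (es : List (Event N)) (z : St N), es.foldl (fun s e => upd e s) z
      = z ∘ (es.map extMap).foldr (· ∘ ·) id := by
  intro es
  induction es with
  | nil => intro z; rfl
  | cons e es ih =>
    intro z
    rw [List.foldl_cons, ih (upd e z), List.map_cons, List.foldr_cons]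
    rfl

/-- Fixation axiom gives, uniformly, a positive chance of absorption in `m` steps. -/
lemma fix_reach {p : St N → Event N → ℝ} (hp : IsRule p) (hfix : FixAxiom p) :
    ∃ m : ℕ, 1 ≤ m ∧ ∀ z : St N,
      0 < (tmat p ^ m) z (stA N) + (tmat p ^ m) z (stB N) := by
  obtain ⟨i, m, ev, hm, hpos, -, hcomp⟩ := hfix
  refine ⟨m, hm, fun z => ?_⟩
  have hfold : (List.ofFn ev).foldl (fun s e => upd e s) z = fun _ => z i := by
    rw [foldl_upd]
    funext j
    have : (List.ofFn ev).map extMap = List.ofFn fun k => extMap (ev k) := by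
      rw [List.map_ofFn]; rfl
    rw [this]
    simp only [Function.comp_apply]
    rw [hcomp j]
  have hlen : (List.ofFn ev).length = m := List.length_ofFn
  have hq := tmat_path_pos hp (List.ofFn ev) z (by
    intro e he w
    obtain ⟨k, hk⟩ := List.mem_ofFn.mp he
    exact hk ▸ hpos k w)
  rw [hlen, hfold] at hq
  by_cases hzi : z i
  · have : (fun _ => z i) = stA N := by funext j; exact hzi
    rw [this] at hq
    have h2 : (0:ℝ) ≤ (tmat p ^ m) z (stB N) := tmat_pow_nonneg hp _ _ _
    linarith
  · have : (fun _ => z i) = stB N := by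
      funext j; simp [stB]; exact Bool.eq_false_iff.mpr hzi ▸ (by simp_all)
    rw [this] at hq
    have h2 : (0:ℝ) ≤ (tmat p ^ m) z (stA N) := tmat_pow_nonneg hp _ _ _
    linarith

end Aux2
section Aux3

variable {N : ℕ}

lemma subQ_row_le_one {p : St N → Event N → ℝ} (hp : IsRule p) (hAB : stA N ≠ stB N)
    (z : TS N) : ∑ b : TS N, subQ p z b ≤ 1 := by
  have h := tmat_row hp z.1
  rw [sum_split hAB (fun y => tmat p z.1 y)] at h
  have h1 : 0 ≤ tmat p z.1 (stA N) := tmat_nonneg hp _ _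
  have h2 : 0 ≤ tmat p z.1 (stB N) := tmat_nonneg hp _ _
  have : ∑ b : TS N, subQ p z b = ∑ y : TS N, tmat p z.1 y.1 := rfl
  rw [this]; linarith

lemma subQ_rowsum_le_one {p : St N → Event N → ℝ} (hp : IsRule p) (hAB : stA N ≠ stB N) :
    ∀ (t : ℕ) (z : TS N), ∑ b : TS N, (subQ p ^ t) z b ≤ 1 := by
  intro t
  induction t with
  | zero => intro z; simp [Matrix.one_apply]
  | succ n ih =>
    intro z
    rw [pow_succ']
    calc ∑ b : TS N, (subQ p * subQ p ^ n) z b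
        = ∑ y : TS N, subQ p z y * ∑ b : TS N, (subQ p ^ n) y b := by
          simp only [Matrix.mul_apply]
          rw [Finset.sum_comm]
          exact Finset.sum_congr rfl fun y _ => by rw [Finset.mul_sum]
      _ ≤ ∑ y : TS N, subQ p z y * 1 := by
          refine Finset.sum_le_sum fun y _ => ?_
          exact mul_le_mul_of_nonneg_left (ih y)
            (by rw [show subQ p z y = (subQ p ^ 1) z y by simp]; exact subQ_nonneg hp hAB 1 z y)
      _ ≤ 1 := by simpa using subQ_row_le_one hp hAB z

lemma subQ_decay {p : St N → Event N → ℝ} (hp : IsRule p) (hAB : stA N ≠ stB N)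
    {m : ℕ} {cc : ℝ} (hm : 1 ≤ m) (hcc1 : cc ≤ 1)
    (hre : ∀ z : TS N, ∑ b : TS N, (subQ p ^ m) z b ≤ 1 - cc) :
    ∀ (t : ℕ) (z : TS N), ∑ b : TS N, (subQ p ^ t) z b ≤ (1 - cc) ^ (t / m) := by
  intro t
  induction t using Nat.strong_induction_on with
  | _ t ih =>
    intro z
    by_cases ht : t < m
    · rw [Nat.div_eq_of_lt ht, pow_zero]
      exact subQ_rowsum_le_one hp hAB t z
    · push_neg at ht
      have h1 : m + (t - m) = t := by omega
      have hr0 : (0:ℝ) ≤ 1 - cc := by linarith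
      have step : ∑ b : TS N, (subQ p ^ t) z b
          ≤ (1 - cc) ^ ((t - m) / m) * (1 - cc) := by
        calc ∑ b : TS N, (subQ p ^ t) z b
            = ∑ y : TS N, (subQ p ^ m) z y * ∑ b : TS N, (subQ p ^ (t - m)) y b := by
              rw [← h1, pow_add]
              simp only [Matrix.mul_apply, Nat.add_sub_cancel_left]
              rw [Finset.sum_comm]
              exact Finset.sum_congr rfl fun y _ => by rw [Finset.mul_sum]
          _ ≤ ∑ y : TS N, (subQ p ^ m) z y * (1 - cc) ^ ((t - m) / m) := by
              refine Finset.sum_le_sum fun y _ => ?_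
              exact mul_le_mul_of_nonneg_left (ih (t - m) (by omega) y)
                (subQ_nonneg hp hAB m z y)
          _ = (∑ y : TS N, (subQ p ^ m) z y) * (1 - cc) ^ ((t - m) / m) := by
              rw [← Finset.sum_mul]
          _ ≤ (1 - cc) * (1 - cc) ^ ((t - m) / m) := by
              exact mul_le_mul_of_nonneg_right (hre z) (pow_nonneg hr0 _)
          _ = (1 - cc) ^ ((t - m) / m) * (1 - cc) := mul_comm _ _
      rw [Nat.div_eq_sub_div (by omega) ht, pow_succ]
      exact step

lemma subQ_entry_le {p : St N → Event N → ℝ} (hp : IsRule p) (hAB : stA N ≠ stB N)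
    (t : ℕ) (a b : TS N) : (subQ p ^ t) a b ≤ ∑ c : TS N, (subQ p ^ t) a c :=
  Finset.single_le_sum (fun c _ => subQ_nonneg hp hAB t a c) (Finset.mem_univ b)

lemma subQ_summable {p : St N → Event N → ℝ} (hp : IsRule p) (hAB : stA N ≠ stB N)
    {m : ℕ} {cc : ℝ} (hm : 1 ≤ m) (hcc0 : 0 < cc) (hcc1 : cc ≤ 1)
    (hre : ∀ z : TS N, ∑ b : TS N, (subQ p ^ m) z b ≤ 1 - cc) (a b : TS N) :
    Summable fun t : ℕ => (subQ p ^ t) a b := by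
  set r : ℝ := 1 - cc with hr
  have hr0 : (0:ℝ) ≤ r := by simp [hr]; linarith
  have hr1 : r < 1 := by simp [hr]; linarith
  have hent : ∀ t, (subQ p ^ t) a b ≤ r ^ (t / m) := fun t =>
    (subQ_entry_le hp hAB t a b).trans (subQ_decay hp hAB hm hcc1 hre t a)
  have hnn : ∀ t, 0 ≤ (subQ p ^ t) a b := fun t => subQ_nonneg hp hAB t a b
  have block : ∀ n : ℕ, ∑ t ∈ Finset.range (m * n), (subQ p ^ t) a b
      ≤ (m : ℝ) * ∑ k ∈ Finset.range n, r ^ k := by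
    intro n
    induction n with
    | zero => simp
    | succ n ihn =>
      rw [Nat.mul_succ, Finset.sum_range_add, Finset.sum_range_succ, mul_add]
      refine add_le_add ihn ?_
      calc ∑ j ∈ Finset.range m, (subQ p ^ (m * n + j)) a b
          ≤ ∑ j ∈ Finset.range m, r ^ n := by
            refine Finset.sum_le_sum fun j _ => ?_
            refine (hent _).trans (pow_le_pow_of_le_one hr0 (by linarith) ?_)
            exact (Nat.le_div_iff_mul_le (by omega)).mpr
              (by rw [mul_comm]; exact Nat.le_add_right _ _)
        _ = (m : ℝ) * r ^ n := by simp [mul_comm]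
  refine summable_of_sum_range_le (c := (m : ℝ) * (1 - r)⁻¹) hnn fun n => ?_
  calc ∑ t ∈ Finset.range n, (subQ p ^ t) a b
      ≤ ∑ t ∈ Finset.range (m * n), (subQ p ^ t) a b := by
        refine Finset.sum_le_sum_of_subset_of_nonneg
          (Finset.range_subset_range.mpr (Nat.le_mul_of_pos_left n (by omega))) ?_
        exact fun t _ _ => hnn t
    _ ≤ (m : ℝ) * ∑ k ∈ Finset.range n, r ^ k := block n
    _ ≤ (m : ℝ) * (1 - r)⁻¹ := by
        refine mul_le_mul_of_nonneg_left ?_ (by positivity)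
        have hs := Summable.sum_le_tsum (Finset.range n)
          (fun i _ => pow_nonneg hr0 i) (summable_geometric_of_lt_one hr0 hr1)
        rwa [tsum_geometric_of_lt_one hr0 hr1] at hs

lemma tendsto_pow_div {r : ℝ} (hr0 : 0 ≤ r) (hr1 : r < 1) {m : ℕ} (hm : 1 ≤ m) :
    Tendsto (fun n : ℕ => r ^ (n / m)) atTop (nhds 0) := by
  refine (tendsto_pow_atTop_nhds_zero_of_lt_one hr0 hr1).comp ?_
  refine Filter.tendsto_atTop_atTop.mpr fun b => ⟨b * m, fun a ha => ?_⟩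
  exact (Nat.le_div_iff_mul_le (by omega)).mpr ha

end Aux3
/-- for every transient `x`, the stationary probability of `x` in the amended
chain is (one-sidedly) differentiable in `u` at `u = 0`, with derivative the sojourn time
`t_ξ(x)`. -/
theorem statement0 {N : ℕ} (p : St N → Event N → ℝ) (hp : IsRule p)
    (hfix : FixAxiom p) (ξ : St N) (hξ : Transient ξ)
    (statDist : ℝ → St N → ℝ)
    (hstat : ∀ u ∈ Set.Ioc (0 : ℝ) 1, IsStat (amend p ξ u) (statDist u))
    (x : St N) (hx : Transient x) :
    ∃ f : ℝ → ℝ, (∀ u ∈ Set.Ioc (0 : ℝ) 1, f u = statDist u x) ∧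
      HasDerivWithinAt f (sojourn p ξ x) (Set.Ici 0) 0 := by
  classical
  -- the two monoallelic states are distinct
  have hAB : stA N ≠ stB N := by
    intro h
    rcases Nat.eq_zero_or_pos N with h0 | h0
    · exact hξ.1 (funext fun i => absurd i.2 (by omega))
    · exact absurd (congrFun h ⟨0, h0⟩) (by simp [stA, stB])
  -- uniform absorption probability
  obtain ⟨m, hm, hpos⟩ := fix_reach hp hfix
  have hne : (Finset.univ : Finset (St N)).Nonempty := ⟨stA N, Finset.mem_univ _⟩
  set g : St N → ℝ := fun z => (tmat p ^ m) z (stA N) + (tmat p ^ m) z (stB N) with hg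
  set cc : ℝ := min (Finset.univ.inf' hne g) 1 with hcc
  have hcc0 : 0 < cc := lt_min (Finset.lt_inf'_iff hne |>.mpr fun z _ => hpos z) one_pos
  have hcc1 : cc ≤ 1 := min_le_right _ _
  have hre0 : ∀ z : St N, cc ≤ g z := fun z =>
    (min_le_left _ _).trans (Finset.inf'_le g (Finset.mem_univ z))
  have hre : ∀ z : TS N, ∑ b : TS N, (subQ p ^ m) z b ≤ 1 - cc := by
    intro z
    have h1 := tmat_pow_row hp m z.1
    rw [sum_split hAB (fun y => (tmat p ^ m) z.1 y)] at h1
    have h2 : ∑ b : TS N, (subQ p ^ m) z b = ∑ b : TS N, (tmat p ^ m) z.1 b.1 :=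
      Finset.sum_congr rfl fun b _ => subQ_pow_eq hAB m z b
    have h3 : cc ≤ (tmat p ^ m) z.1 (stA N) + (tmat p ^ m) z.1 (stB N) := hre0 z.1
    rw [h2]; linarith
  have hr0 : (0:ℝ) ≤ 1 - cc := by linarith
  have hr1 : 1 - cc < 1 := by linarith
  set ξ' : TS N := ⟨ξ, hξ⟩ with hξ'
  set x' : TS N := ⟨x, hx⟩ with hx'
  have hsum : ∀ b : TS N, Summable fun t : ℕ => (subQ p ^ t) ξ' b :=
    fun b => subQ_summable hp hAB hm hcc0 hcc1 hre ξ' b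
  set tvec : TS N → ℝ := fun y => ∑' t : ℕ, (subQ p ^ t) ξ' y with htvec
  set T : ℝ := ∑ y : TS N, tvec y with hT
  have htv0 : ∀ y, 0 ≤ tvec y := fun y =>
    tsum_nonneg fun t => subQ_nonneg hp hAB t ξ' y
  have hT0 : 0 ≤ T := Finset.sum_nonneg fun y _ => htv0 y
  have hsoj : sojourn p ξ x = tvec x' :=
    tsum_congr fun t => (subQ_pow_eq hAB t ξ' x').symm
  -- the key computation of the stationary distribution
  have key : ∀ u ∈ Set.Ioc (0:ℝ) 1, statDist u x = u * tvec x' / (1 + u * T) := by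
    intro u hu
    obtain ⟨hq0, hq1, hq2⟩ := hstat u hu
    set q : St N → ℝ := statDist u with hqdef
    set w : ℝ := q (stA N) + q (stB N) with hw
    have hqle : ∀ z, q z ≤ 1 := by
      intro z
      have h := Finset.single_le_sum (f := q) (fun y _ => hq0 y) (Finset.mem_univ z)
      rw [hq1] at h; exact h
    -- one-step stationarity at transient states
    have hstep : ∀ y : TS N, q y.1
        = u * w * (if ξ' = y then 1 else 0) + ∑ z : TS N, q z.1 * subQ p z y := by
      intro y
      have h := hq2 y.1
      rw [sum_split hAB (fun z => q z * amend p ξ u z y.1)] at h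
      have hA : amend p ξ u (stA N) y.1 = if y.1 = ξ then u else 0 := by
        unfold amend
        simp only [Matrix.of_apply]
        rw [if_pos (show True ∨ stA N = stB N from Or.inl trivial)]
        by_cases hyξ : (y.1 : St N) = ξ
        · rw [if_pos hyξ, if_pos hyξ]
        · rw [if_neg hyξ, if_neg hyξ, tmat_stA y.1 y.2.1, mul_zero]
      have hB : amend p ξ u (stB N) y.1 = if y.1 = ξ then u else 0 := by
        unfold amend
        simp only [Matrix.of_apply]
        rw [if_pos (show stB N = stA N ∨ True from Or.inr trivial)]
        by_cases hyξ : (y.1 : St N) = ξ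
        · rw [if_pos hyξ, if_pos hyξ]
        · rw [if_neg hyξ, if_neg hyξ, tmat_stB y.1 y.2.2, mul_zero]
      have hTr : ∀ z : TS N, amend p ξ u z.1 y.1 = subQ p z y := by
        intro z
        unfold amend
        simp only [Matrix.of_apply]
        rw [if_neg (by push_neg; exact z.2)]
        rfl
      rw [hA, hB] at h
      have h2 : ∑ z : TS N, q z.1 * amend p ξ u z.1 y.1
          = ∑ z : TS N, q z.1 * subQ p z y :=
        Finset.sum_congr rfl fun z _ => by rw [hTr z]
      rw [h2] at h
      have h3 : u * w * (if ξ' = y then 1 else 0)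
          = q (stA N) * (if y.1 = ξ then u else 0)
            + q (stB N) * (if y.1 = ξ then u else 0) := by
        by_cases hyx : y = ξ'
        · rw [if_pos hyx.symm, if_pos (by rw [hyx]), hw]; ring
        · rw [if_neg (fun hh => hyx hh.symm), if_neg (fun hh => hyx (Subtype.ext hh))]
          ring
      rw [h3]
      linarith [h]
    -- iterated stationarity
    have hiter : ∀ (n : ℕ) (y : TS N), q y.1
        = u * w * (∑ t ∈ Finset.range n, (subQ p ^ t) ξ' y)
          + ∑ z : TS N, q z.1 * (subQ p ^ n) z y := by
      intro n
      induction n with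
      | zero =>
        intro y
        simp only [Finset.range_zero, Finset.sum_empty, mul_zero, zero_add, pow_zero]
        have h0 : ∑ z : TS N, q z.1 * (1 : Matrix (TS N) (TS N) ℝ) z y
            = ∑ z : TS N, (if z = y then q z.1 else 0) :=
          Finset.sum_congr rfl fun z _ => by
            rw [Matrix.one_apply]
            split <;> simp
        rw [h0, Finset.sum_ite_eq' Finset.univ y (fun z => q z.1)]
        simp
      | succ n ihn =>
        intro y
        have hdelta : ∑ z : TS N, u * w * (if ξ' = z then 1 else 0) * (subQ p ^ n) z y
            = u * w * (subQ p ^ n) ξ' y := by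
          rw [Finset.sum_eq_single ξ']
          · simp
          · intro z _ hz
            rw [if_neg (fun hh => hz hh.symm)]
            ring
          · intro habs
            exact absurd (Finset.mem_univ ξ') habs
        have hswap : ∑ z : TS N, (∑ z' : TS N, q z'.1 * subQ p z' z) * (subQ p ^ n) z y
            = ∑ z' : TS N, q z'.1 * (subQ p ^ (n+1)) z' y := by
          rw [pow_succ']
          calc ∑ z : TS N, (∑ z' : TS N, q z'.1 * subQ p z' z) * (subQ p ^ n) z y
              = ∑ z : TS N, ∑ z' : TS N, q z'.1 * (subQ p z' z * (subQ p ^ n) z y) := by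
                refine Finset.sum_congr rfl fun z _ => ?_
                rw [Finset.sum_mul]
                exact Finset.sum_congr rfl fun z' _ => by ring
            _ = ∑ z' : TS N, ∑ z : TS N, q z'.1 * (subQ p z' z * (subQ p ^ n) z y) :=
                Finset.sum_comm
            _ = ∑ z' : TS N, q z'.1 * (subQ p * subQ p ^ n) z' y := by
                refine Finset.sum_congr rfl fun z' _ => ?_
                rw [Matrix.mul_apply, Finset.mul_sum]
        have expand : ∑ z : TS N, q z.1 * (subQ p ^ n) z y
            = u * w * (subQ p ^ n) ξ' y
              + ∑ z' : TS N, q z'.1 * (subQ p ^ (n+1)) z' y := by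
          calc ∑ z : TS N, q z.1 * (subQ p ^ n) z y
              = ∑ z : TS N, (u * w * (if ξ' = z then 1 else 0)
                  + ∑ z' : TS N, q z'.1 * subQ p z' z) * (subQ p ^ n) z y :=
                Finset.sum_congr rfl fun z _ => by rw [← hstep z]
            _ = (∑ z : TS N, u * w * (if ξ' = z then 1 else 0) * (subQ p ^ n) z y)
                + ∑ z : TS N, (∑ z' : TS N, q z'.1 * subQ p z' z) * (subQ p ^ n) z y := by
                rw [← Finset.sum_add_distrib]
                exact Finset.sum_congr rfl fun z _ => by ring
            _ = u * w * (subQ p ^ n) ξ' y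
                + ∑ z' : TS N, q z'.1 * (subQ p ^ (n+1)) z' y := by rw [hdelta, hswap]
        rw [ihn y, expand, Finset.sum_range_succ]
        ring
    -- the remainder tends to zero
    have hq_eq : ∀ y : TS N, q y.1 = u * w * tvec y := by
      intro y
      have hrem : Tendsto (fun n => ∑ z : TS N, q z.1 * (subQ p ^ n) z y)
          atTop (nhds 0) := by
        refine squeeze_zero (fun n => Finset.sum_nonneg fun z _ =>
          mul_nonneg (hq0 z.1) (subQ_nonneg hp hAB n z y))
          (g := fun n => (Fintype.card (TS N) : ℝ) * (1 - cc) ^ (n / m)) (fun n => ?_) ?_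
        · calc ∑ z : TS N, q z.1 * (subQ p ^ n) z y
              ≤ ∑ z : TS N, (1 - cc) ^ (n / m) := by
                refine Finset.sum_le_sum fun z _ => ?_
                have h1 : (subQ p ^ n) z y ≤ (1 - cc) ^ (n / m) :=
                  (subQ_entry_le hp hAB n z y).trans (subQ_decay hp hAB hm hcc1 hre n z)
                calc q z.1 * (subQ p ^ n) z y
                    ≤ 1 * (subQ p ^ n) z y :=
                      mul_le_mul_of_nonneg_right (hqle z.1) (subQ_nonneg hp hAB n z y)
                  _ = (subQ p ^ n) z y := one_mul _
                  _ ≤ (1 - cc) ^ (n / m) := h1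
            _ = (Fintype.card (TS N) : ℝ) * (1 - cc) ^ (n / m) := by
                rw [Finset.sum_const, Finset.card_univ, nsmul_eq_mul]
        · have := (tendsto_pow_div hr0 hr1 hm).const_mul (Fintype.card (TS N) : ℝ)
          simpa using this
      have hpart : Tendsto (fun n => u * w *
          (∑ t ∈ Finset.range n, (subQ p ^ t) ξ' y)) atTop (nhds (u * w * tvec y)) :=
        ((hsum y).hasSum.tendsto_sum_nat).const_mul (u * w)
      have htot : Tendsto (fun n => u * w *
          (∑ t ∈ Finset.range n, (subQ p ^ t) ξ' y)
          + ∑ z : TS N, q z.1 * (subQ p ^ n) z y) atTop (nhds (u * w * tvec y)) := by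
        simpa using hpart.add hrem
      have hconst : Tendsto (fun _ : ℕ => q y.1) atTop (nhds (q y.1)) :=
        tendsto_const_nhds
      have : (fun _ : ℕ => q y.1) = fun n => u * w *
          (∑ t ∈ Finset.range n, (subQ p ^ t) ξ' y)
          + ∑ z : TS N, q z.1 * (subQ p ^ n) z y := funext fun n => hiter n y
      rw [this] at hconst
      exact tendsto_nhds_unique hconst htot
    -- normalization
    have hnorm : w * (1 + u * T) = 1 := by
      have h1 := hq1
      rw [sum_split hAB q] at h1
      have h2 : ∑ y : TS N, q y.1 = u * w * T := by
        rw [hT, Finset.mul_sum]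
        exact Finset.sum_congr rfl fun y _ => hq_eq y
      rw [h2] at h1
      rw [hw] at h1 ⊢
      ring_nf
      ring_nf at h1
      linarith
    have hden : (0:ℝ) < 1 + u * T := by
      have := mul_nonneg (le_of_lt hu.1) hT0
      linarith
    have hqx : q x = u * w * tvec x' := hq_eq x'
    rw [hqx, eq_div_iff hden.ne']
    calc u * w * tvec x' * (1 + u * T) = u * tvec x' * (w * (1 + u * T)) := by ring
      _ = u * tvec x' := by rw [hnorm]; ring
  -- conclusion: the explicit function and its derivative
  refine ⟨fun u => u * tvec x' / (1 + u * T), fun u hu => (key u hu).symm, ?_⟩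
  rw [hsoj]
  have h1 : HasDerivAt (fun u : ℝ => u * tvec x') (tvec x') 0 := by
    simpa using (hasDerivAt_id (0:ℝ)).mul_const (tvec x')
  have h2 : HasDerivAt (fun u : ℝ => 1 + u * T) T 0 := by
    simpa using ((hasDerivAt_id (0:ℝ)).mul_const T).const_add 1
  have hd := h1.div h2 (by norm_num)
  have : (tvec x' * (1 + 0 * T) - 0 * tvec x' * T) / (1 + 0 * T) ^ 2 = tvec x' := by
    norm_num
  rw [this] at hd
  exact hd.hasDerivWithinAt
end Evo
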